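/- Single-punisher impact bound: Let p be a probability profile, i ∈ N, and j ∈ (N ∪ {s}) ∖ {i} with p_j[i] < 1 and q_i[p] > 0. Let p' be the profile that agrees with p everywhere except that p'_j[i] < p_j[i]. Then q_i[p'] ≤ q_i[p] · (1 − p'_j[i]) / (1 − p_j[i]). -/

import Mathlib

/-- The probability `φ[R, I | p, L]` that no node of `L` ever gets infected, in the
epidemic dissemination process on the node set `N`, given that `R` is the set of nodes
infected before the last step, `I` the set of nodes infected in the last step, and
`p` the profile of forwarding probabilities. -/
noncomputable def phi {V : Type*} [Fintype V] [DecidableEq V]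
    (N : Finset V) (p : V → V → ℝ) (L : Finset V) (R I : Finset V) : ℝ :=
  if hI : I = ∅ then 1
  else
    ∑ H ∈ (N \ (R ∪ I ∪ L)).powerset.attach,
      (∏ k ∈ H.1, (1 - ∏ l ∈ I, (1 - p l k))) *
        (∏ k ∈ N \ (H.1 ∪ R ∪ I), ∏ l ∈ I, (1 - p l k)) *
        phi N p L (R ∪ I) H.1
termination_by (Finset.univ \ (R ∪ I)).card * 2 + I.card
decreasing_by
  have hHsub : H.1 ⊆ Finset.univ \ (R ∪ I) := by
    intro x hx
    have hx' := Finset.mem_powerset.mp H.2 hx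
    rw [Finset.mem_sdiff] at hx' ⊢
    exact ⟨Finset.mem_univ x, fun hc => hx'.2 (Finset.mem_union_left _ hc)⟩
  have heq : Finset.univ \ (R ∪ I ∪ H.1) = (Finset.univ \ (R ∪ I)) \ H.1 := by
    ext x
    simp only [Finset.mem_sdiff, Finset.mem_union, Finset.mem_univ, true_and]
    tauto
  have hcard : (Finset.univ \ (R ∪ I ∪ H.1)).card
      = (Finset.univ \ (R ∪ I)).card - H.1.card := by
    rw [heq, Finset.card_sdiff, Finset.inter_eq_left.mpr hHsub]
  have hle : H.1.card ≤ (Finset.univ \ (R ∪ I)).card := Finset.card_le_card hHsub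
  have hpos : 0 < I.card := Finset.card_pos.mpr (Finset.nonempty_iff_ne_empty.mpr hI)
  omega


lemma phi_empty {V : Type*} [Fintype V] [DecidableEq V]
    (N : Finset V) (p : V → V → ℝ) (L R : Finset V) :
    phi N p L R ∅ = 1 := by
  rw [phi]; simp

lemma phi_eq {V : Type*} [Fintype V] [DecidableEq V]
    (N : Finset V) (p : V → V → ℝ) (L R I : Finset V) (hI : I ≠ ∅) :
    phi N p L R I =
      ∑ H ∈ (N \ (R ∪ I ∪ L)).powerset.attach,
        (∏ k ∈ H.1, (1 - ∏ l ∈ I, (1 - p l k))) *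
          (∏ k ∈ N \ (H.1 ∪ R ∪ I), ∏ l ∈ I, (1 - p l k)) *
          phi N p L (R ∪ I) H.1 := by
  rw [phi]
  exact dif_neg hI

lemma measure_lt {V : Type*} [Fintype V] [DecidableEq V] {N L R I : Finset V}
    {H : Finset V} (hH : H ⊆ N \ (R ∪ I ∪ L)) (hI : I ≠ ∅) :
    (Finset.univ \ (R ∪ I ∪ H)).card * 2 + H.card <
      (Finset.univ \ (R ∪ I)).card * 2 + I.card := by
  have hHsub : H ⊆ Finset.univ \ (R ∪ I) := by
    intro x hx
    have hx' := hH hx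
    rw [Finset.mem_sdiff] at hx' ⊢
    exact ⟨Finset.mem_univ x, fun hc => hx'.2 (Finset.mem_union_left _ hc)⟩
  have heq : Finset.univ \ (R ∪ I ∪ H) = (Finset.univ \ (R ∪ I)) \ H := by
    ext x
    simp only [Finset.mem_sdiff, Finset.mem_union, Finset.mem_univ, true_and]
    tauto
  have hcard : (Finset.univ \ (R ∪ I ∪ H)).card
      = (Finset.univ \ (R ∪ I)).card - H.card := by
    rw [heq, Finset.card_sdiff, Finset.inter_eq_left.mpr hHsub]
  have hle : H.card ≤ (Finset.univ \ (R ∪ I)).card := Finset.card_le_card hHsub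
  have hpos : 0 < I.card := Finset.card_pos.mpr (Finset.nonempty_iff_ne_empty.mpr hI)
  omega

/-- Once `j` is in the recovered set, the value of `phi` does not depend on the row `j`
of the profile. -/
lemma phi_congr_rowj {V : Type*} [Fintype V] [DecidableEq V]
    (N : Finset V) (p p' : V → V → ℝ) (L : Finset V) (j : V)
    (hagree : ∀ l k, l ≠ j → p' l k = p l k) :
    ∀ n R I, (Finset.univ \ (R ∪ I)).card * 2 + I.card ≤ n → j ∈ R → j ∉ I →
      phi N p' L R I = phi N p L R I := by
  intro n
  induction n with
  | zero =>
    intro R I hn _ _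
    have : I = ∅ := Finset.card_eq_zero.mp (by omega)
    subst this
    rw [phi_empty, phi_empty]
  | succ n ih =>
    intro R I hn hjR hjI
    by_cases hI : I = ∅
    · subst hI; rw [phi_empty, phi_empty]
    · rw [phi_eq _ _ _ _ _ hI, phi_eq _ _ _ _ _ hI]
      refine Finset.sum_congr rfl ?_
      intro H _
      have hHsub : H.1 ⊆ N \ (R ∪ I ∪ L) := Finset.mem_powerset.mp H.2
      have hne : ∀ l ∈ I, l ≠ j := fun l hl hc => hjI (hc ▸ hl)
      have hP : (∏ k ∈ H.1, (1 - ∏ l ∈ I, (1 - p' l k)))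
          = ∏ k ∈ H.1, (1 - ∏ l ∈ I, (1 - p l k)) := by
        refine Finset.prod_congr rfl fun k _ => ?_
        congr 1
        exact Finset.prod_congr rfl fun l hl => by rw [hagree l k (hne l hl)]
      have hQ : (∏ k ∈ N \ (H.1 ∪ R ∪ I), ∏ l ∈ I, (1 - p' l k))
          = ∏ k ∈ N \ (H.1 ∪ R ∪ I), ∏ l ∈ I, (1 - p l k) := by
        refine Finset.prod_congr rfl fun k _ => ?_
        exact Finset.prod_congr rfl fun l hl => by rw [hagree l k (hne l hl)]
      have hjH : j ∉ H.1 := fun hc => by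
        have := hHsub hc
        rw [Finset.mem_sdiff] at this
        exact this.2 (Finset.mem_union_left _ (Finset.mem_union_left _ hjR))
      have hrec : phi N p' L (R ∪ I) H.1 = phi N p L (R ∪ I) H.1 := by
        refine ih (R ∪ I) H.1 ?_ (Finset.mem_union_left _ hjR) hjH
        have := measure_lt hHsub hI
        omega
      rw [hP, hQ, hrec]

lemma phi_key {V : Type*} [Fintype V] [DecidableEq V]
    (N : Finset V) (s : V)
    (p : V → V → ℝ)
    (hp : ∀ l ∈ insert s N, ∀ k ∈ N, 0 ≤ p l k ∧ p l k ≤ 1)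
    (i : V) (hi : i ∈ N) (j : V) (hpj : p j i < 1)
    (p' : V → V → ℝ)
    (hagree : ∀ l k, ¬ (l = j ∧ k = i) → p' l k = p l k)
    (hless : p' j i < p j i) :
    ∀ n R I, (Finset.univ \ (R ∪ I)).card * 2 + I.card ≤ n →
      I ⊆ insert s N → i ∉ R → i ∉ I → j ∉ R →
      phi N p' {i} R I ≤ (1 - p' j i) / (1 - p j i) * phi N p {i} R I := by
  have hd : (0:ℝ) < 1 - p j i := by linarith
  have hr : (1:ℝ) ≤ (1 - p' j i) / (1 - p j i) := by
    rw [le_div_iff₀ hd]; linarith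
  have hagree' : ∀ l k, l ≠ j → p' l k = p l k :=
    fun l k h => hagree l k (fun hc => h hc.1)
  intro n
  induction n with
  | zero =>
    intro R I hn _ _ _ _
    have : I = ∅ := Finset.card_eq_zero.mp (by omega)
    subst this
    rw [phi_empty, phi_empty]
    simpa using hr
  | succ n ih =>
    intro R I hn hIsub hiR hiI hjR
    by_cases hI : I = ∅
    · subst hI; rw [phi_empty, phi_empty]; simpa using hr
    rw [phi_eq _ _ _ _ _ hI, phi_eq _ _ _ _ _ hI, Finset.mul_sum]
    by_cases hjI : j ∈ I
    · -- the factor (1 - p j i) appears in Q; afterwards j is recovered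
      refine le_of_eq (Finset.sum_congr rfl ?_)
      intro H _
      have hHsub : H.1 ⊆ N \ (R ∪ I ∪ {i}) := Finset.mem_powerset.mp H.2
      have hiH : i ∉ H.1 := fun hc => by
        have := hHsub hc
        rw [Finset.mem_sdiff] at this
        exact this.2 (Finset.mem_union_right _ (Finset.mem_singleton_self i))
      have hjH : j ∉ H.1 := fun hc => by
        have := hHsub hc
        rw [Finset.mem_sdiff] at this
        exact this.2 (Finset.mem_union_left _ (Finset.mem_union_right _ hjI))
      have hP : (∏ k ∈ H.1, (1 - ∏ l ∈ I, (1 - p' l k)))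
          = ∏ k ∈ H.1, (1 - ∏ l ∈ I, (1 - p l k)) := by
        refine Finset.prod_congr rfl fun k hk => ?_
        have hki : k ≠ i := fun hc => hiH (hc ▸ hk)
        congr 1
        exact Finset.prod_congr rfl fun l _ => by
          rw [hagree l k (fun hc => hki hc.2)]
      have hphi : phi N p' {i} (R ∪ I) H.1 = phi N p {i} (R ∪ I) H.1 := by
        refine phi_congr_rowj N p p' {i} j hagree'
          ((Finset.univ \ ((R ∪ I) ∪ H.1)).card * 2 + H.1.card) (R ∪ I) H.1
          le_rfl (Finset.mem_union_right _ hjI) hjH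
      have hiS : i ∈ N \ (H.1 ∪ R ∪ I) := by
        rw [Finset.mem_sdiff]
        refine ⟨hi, fun hc => ?_⟩
        rcases Finset.mem_union.mp hc with hc | hc
        · rcases Finset.mem_union.mp hc with hc | hc
          · exact hiH hc
          · exact hiR hc
        · exact hiI hc
      -- split off the k = i factor of Q, then the l = j factor
      have hsplit : ∀ q : V → V → ℝ,
          (∏ k ∈ N \ (H.1 ∪ R ∪ I), ∏ l ∈ I, (1 - q l k))
            = (1 - q j i) * ((∏ l ∈ I.erase j, (1 - q l i)) *
              ∏ k ∈ (N \ (H.1 ∪ R ∪ I)).erase i, ∏ l ∈ I, (1 - q l k)) := by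
        intro q
        rw [← Finset.mul_prod_erase _ _ hiS, ← Finset.mul_prod_erase _ _ hjI, mul_assoc]
      have hC : (∏ l ∈ I.erase j, (1 - p' l i)) = ∏ l ∈ I.erase j, (1 - p l i) := by
        refine Finset.prod_congr rfl fun l hl => ?_
        rw [hagree' l i (Finset.ne_of_mem_erase hl)]
      have hD : (∏ k ∈ (N \ (H.1 ∪ R ∪ I)).erase i, ∏ l ∈ I, (1 - p' l k))
          = ∏ k ∈ (N \ (H.1 ∪ R ∪ I)).erase i, ∏ l ∈ I, (1 - p l k) := by
        refine Finset.prod_congr rfl fun k hk => ?_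
        refine Finset.prod_congr rfl fun l _ => ?_
        rw [hagree l k (fun hc => Finset.ne_of_mem_erase hk hc.2)]
      rw [hP, hphi, hsplit p', hsplit p, hC, hD]
      field_simp
    · -- j not yet infected: use the induction hypothesis termwise
      refine Finset.sum_le_sum ?_
      intro H _
      have hHsub : H.1 ⊆ N \ (R ∪ I ∪ {i}) := Finset.mem_powerset.mp H.2
      have hHN : ∀ k ∈ H.1, k ∈ N := fun k hk => (Finset.mem_sdiff.mp (hHsub hk)).1
      have hiH : i ∉ H.1 := fun hc => by
        have := hHsub hc
        rw [Finset.mem_sdiff] at this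
        exact this.2 (Finset.mem_union_right _ (Finset.mem_singleton_self i))
      have hne : ∀ l ∈ I, l ≠ j := fun l hl hc => hjI (hc ▸ hl)
      have hP : (∏ k ∈ H.1, (1 - ∏ l ∈ I, (1 - p' l k)))
          = ∏ k ∈ H.1, (1 - ∏ l ∈ I, (1 - p l k)) := by
        refine Finset.prod_congr rfl fun k _ => ?_
        congr 1
        exact Finset.prod_congr rfl fun l hl => by rw [hagree' l k (hne l hl)]
      have hQ : (∏ k ∈ N \ (H.1 ∪ R ∪ I), ∏ l ∈ I, (1 - p' l k))
          = ∏ k ∈ N \ (H.1 ∪ R ∪ I), ∏ l ∈ I, (1 - p l k) := by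
        refine Finset.prod_congr rfl fun k _ => ?_
        exact Finset.prod_congr rfl fun l hl => by rw [hagree' l k (hne l hl)]
      have hPnn : 0 ≤ ∏ k ∈ H.1, (1 - ∏ l ∈ I, (1 - p l k)) := by
        refine Finset.prod_nonneg fun k hk => ?_
        rw [sub_nonneg]
        refine Finset.prod_le_one (fun l hl => ?_) (fun l hl => ?_)
        · linarith [(hp l (hIsub hl) k (hHN k hk)).2]
        · linarith [(hp l (hIsub hl) k (hHN k hk)).1]
      have hQnn : 0 ≤ ∏ k ∈ N \ (H.1 ∪ R ∪ I), ∏ l ∈ I, (1 - p l k) := by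
        refine Finset.prod_nonneg fun k hk => ?_
        refine Finset.prod_nonneg fun l hl => ?_
        have hkN : k ∈ N := (Finset.mem_sdiff.mp hk).1
        linarith [(hp l (hIsub hl) k hkN).2]
      have hphi : phi N p' {i} (R ∪ I) H.1
          ≤ (1 - p' j i) / (1 - p j i) * phi N p {i} (R ∪ I) H.1 := by
        refine ih (R ∪ I) H.1 ?_ (fun k hk => Finset.mem_insert_of_mem (hHN k hk))
          (fun hc => (Finset.mem_union.mp hc).elim hiR hiI) hiH
          (fun hc => (Finset.mem_union.mp hc).elim hjR hjI)
        have := measure_lt hHsub hI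
        omega
      rw [hP, hQ]
      calc (∏ k ∈ H.1, (1 - ∏ l ∈ I, (1 - p l k))) *
            (∏ k ∈ N \ (H.1 ∪ R ∪ I), ∏ l ∈ I, (1 - p l k)) *
            phi N p' {i} (R ∪ I) H.1
          ≤ (∏ k ∈ H.1, (1 - ∏ l ∈ I, (1 - p l k))) *
            (∏ k ∈ N \ (H.1 ∪ R ∪ I), ∏ l ∈ I, (1 - p l k)) *
            ((1 - p' j i) / (1 - p j i) * phi N p {i} (R ∪ I) H.1) :=
            mul_le_mul_of_nonneg_left hphi (mul_nonneg hPnn hQnn)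
        _ = (1 - p' j i) / (1 - p j i) *
            ((∏ k ∈ H.1, (1 - ∏ l ∈ I, (1 - p l k))) *
            (∏ k ∈ N \ (H.1 ∪ R ∪ I), ∏ l ∈ I, (1 - p l k)) *
            phi N p {i} (R ∪ I) H.1) := by ring

/-- **Single-punisher impact bound.**  If `p'` agrees with `p` except that
`p'_j[i] < p_j[i]`, with `p_j[i] < 1` and `q_i[p] > 0`, then
`q_i[p'] ≤ q_i[p] · (1 − p'_j[i]) / (1 − p_j[i])`. -/
theorem single_punisher_impact
    {V : Type*} [Fintype V] [DecidableEq V]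
    (N : Finset V) (s : V) (hs : s ∉ N)
    (p : V → V → ℝ)
    (hp : ∀ l ∈ insert s N, ∀ k ∈ N, 0 ≤ p l k ∧ p l k ≤ 1)
    (i : V) (hi : i ∈ N)
    (j : V) (hj : j ∈ insert s N) (hji : j ≠ i)
    (hpj : p j i < 1)
    (hq : 0 < phi N p {i} ∅ {s})
    (p' : V → V → ℝ)
    (hagree : ∀ l k, ¬ (l = j ∧ k = i) → p' l k = p l k)
    (hless : p' j i < p j i) (hnn : 0 ≤ p' j i) :
    phi N p' {i} ∅ {s} ≤ phi N p {i} ∅ {s} * (1 - p' j i) / (1 - p j i) := by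
  have hsi : i ≠ s := fun hc => hs (hc ▸ hi)
  have key := phi_key N s p hp i hi j hpj p' hagree hless
    ((Finset.univ \ ((∅ : Finset V) ∪ {s})).card * 2 + ({s} : Finset V).card)
    ∅ {s} le_rfl
    (Finset.singleton_subset_iff.mpr (Finset.mem_insert_self s N))
    (Finset.notMem_empty i)
    (fun hc => hsi (Finset.mem_singleton.mp hc))
    (Finset.notMem_empty j)
  rw [mul_div_assoc, mul_comm]
  exact key
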